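/- Let k ≥ 4 and m ≥ k be integers, and let L be the (m, k−2)-lollipop graph. Then the number of induced copies of the path P_k in L is m − 1, while the number of (not necessarily induced) path subgraphs of L on k vertices is at least m!/(2·(m−k)!). Consequently, the fraction of k-vertex path subgraphs of L whose vertex set induces a copy of P_k is at most 2·(m−1)·(m−k)!/m!. -/

import Mathlib

/-- The (m, p)-lollipop graph: a complete graph on m vertices (the `Sum.inl` vertices),
a path t_1 − t_2 − ⋯ − t_p on p additional vertices (the `Sum.inr` vertices, in order),
and one extra edge joining the first clique vertex v_1 to the first path vertex t_1. -/
def lollipop (m p : ℕ) : SimpleGraph (Fin m ⊕ Fin p) :=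
  SimpleGraph.fromRel fun x y =>
    match x, y with
    | Sum.inl a, Sum.inl b => a ≠ b
    | Sum.inr a, Sum.inr b => (a : ℕ) + 1 = (b : ℕ)
    | Sum.inl a, Sum.inr b => (a : ℕ) = 0 ∧ (b : ℕ) = 0
    | Sum.inr _, Sum.inl _ => False

section LollipopAux
open SimpleGraph Sum

variable {m n : ℕ}

lemma adj_ll {a b : Fin m} : (lollipop m n).Adj (inl a) (inl b) ↔ a ≠ b := by
  simp [lollipop, SimpleGraph.fromRel_adj]; tauto

lemma adj_lr {a : Fin m} {b : Fin n} :
    (lollipop m n).Adj (inl a) (inr b) ↔ (a : ℕ) = 0 ∧ (b : ℕ) = 0 := by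
  simp [lollipop, SimpleGraph.fromRel_adj]

lemma adj_rl {a : Fin m} {b : Fin n} :
    (lollipop m n).Adj (inr b) (inl a) ↔ (a : ℕ) = 0 ∧ (b : ℕ) = 0 := by
  rw [SimpleGraph.adj_comm]; exact adj_lr

lemma adj_rr {a b : Fin n} :
    (lollipop m n).Adj (inr a) (inr b) ↔ ((a:ℕ) + 1 = b ∨ (b:ℕ) + 1 = a) := by
  simp only [lollipop, SimpleGraph.fromRel_adj]
  constructor
  · rintro ⟨-, h⟩; exact h
  · rintro h
    refine ⟨?_, h⟩
    intro he
    obtain rfl := inr_injective he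
    omega

/-- the canonical induced path vertex set -/
def Sset (m n : ℕ) [NeZero m] (c : Fin m) : Finset (Fin m ⊕ Fin n) :=
  {Sum.inl 0, Sum.inl c} ∪ Finset.univ.image Sum.inr

section
variable [NeZero m] {c : Fin m}

lemma mem_Sset {x : Fin m ⊕ Fin n} :
    x ∈ Sset m n c ↔ x = inl 0 ∨ x = inl c ∨ ∃ b : Fin n, x = inr b := by
  simp [Sset, eq_comm]

/-- the explicit vertex map Fin (n+2) → lollipop vertices -/
def gmap (c : Fin m) (i : Fin (n + 2)) : Fin m ⊕ Fin n :=
  if h : (i : ℕ) = 0 then inl c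
  else if h2 : (i : ℕ) = 1 then inl 0
  else inr ⟨(i : ℕ) - 2, by omega⟩

lemma gmap_mem (i : Fin (n+2)) : gmap c i ∈ Sset m n c := by
  unfold gmap
  split
  · simp [mem_Sset]
  · split
    · simp [mem_Sset]
    · simp [mem_Sset]

lemma gmap_inj (hc : c ≠ 0) : Function.Injective (gmap (n := n) c) := by
  intro i j hij
  unfold gmap at hij
  split at hij <;> split at hij <;>
    first
      | (exact Fin.ext (by omega))
      | (split at hij <;>
          first
            | (exact Fin.ext (by omega))
            | (split at hij <;>
                first
                  | (exact Fin.ext (by omega))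
                  | (simp_all; exact Fin.ext (by omega))
                  | simp_all)
            | simp_all)
      | simp_all

lemma gmap_surj (x : Fin m ⊕ Fin n) (hx : x ∈ Sset m n c) :
    ∃ i : Fin (n+2), gmap c i = x := by
  rw [mem_Sset] at hx
  rcases hx with rfl | rfl | ⟨b, rfl⟩
  · exact ⟨⟨1, by omega⟩, by simp [gmap]⟩
  · exact ⟨⟨0, by omega⟩, by simp [gmap]⟩
  · refine ⟨⟨(b : ℕ) + 2, by omega⟩, ?_⟩
    rw [gmap, dif_neg (by simp), dif_neg (by simp)]
    exact congrArg inr (Fin.ext (by simp))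

lemma gmap_adj (hc : c ≠ 0) (x y : Fin (n+2)) :
    (lollipop m n).Adj (gmap c x) (gmap c y) ↔ (pathGraph (n+2)).Adj x y := by
  rw [pathGraph_adj]
  have hc' : (c : ℕ) ≠ 0 := fun h => hc (Fin.ext h)
  unfold gmap
  split <;> split <;> try split
  all_goals try split
  all_goals simp_all [adj_ll, adj_lr, adj_rl, adj_rr, Fin.ext_iff, -Fin.val_eq_zero_iff]
  all_goals omega
end


variable {m n : ℕ} [NeZero m]

lemma induce_adj' {s : Set (Fin m ⊕ Fin n)} {u v : ↥s} :
    ((lollipop m n).induce s).Adj u v ↔ (lollipop m n).Adj ↑u ↑v := Iff.rfl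

lemma Sset_iso {c : Fin m} (hc : c ≠ 0) :
    Nonempty ((lollipop m n).induce (↑(Sset m n c) : Set (Fin m ⊕ Fin n))
      ≃g pathGraph (n + 2)) := by
  have hmem : ∀ i : Fin (n+2), gmap c i ∈ (↑(Sset m n c) : Set (Fin m ⊕ Fin n)) := by
    intro i; exact gmap_mem i
  have hbij : Function.Bijective
      (fun i : Fin (n+2) => (⟨gmap c i, hmem i⟩ : ↥(↑(Sset m n c) : Set (Fin m ⊕ Fin n)))) := by
    constructor
    · intro i j hij
      exact gmap_inj hc (by simpa [Subtype.ext_iff] using hij)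
    · rintro ⟨x, hx⟩
      obtain ⟨i, hi⟩ := gmap_surj x (by simpa using hx)
      exact ⟨i, by simp [hi]⟩
  let e := Equiv.ofBijective _ hbij
  refine ⟨(SimpleGraph.Iso.symm ⟨e, ?_⟩)⟩
  intro x y
  exact gmap_adj hc x y

lemma Sset_card {c : Fin m} (hc : c ≠ 0) : (Sset m n c).card = n + 2 := by
  rw [Sset]
  rw [Finset.card_union_of_disjoint, Finset.card_image_of_injective _ inr_injective]
  · rw [Finset.card_pair (fun h => hc (inl_injective h).symm)]
    simp [add_comm]
  · simp [Finset.disjoint_left]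

lemma Sset_injective {c d : Fin m} (hc : c ≠ 0) (hd : d ≠ 0)
    (h : Sset m n c = Sset m n d) : c = d := by
  have : (inl c : Fin m ⊕ Fin n) ∈ Sset m n d := by rw [← h]; simp [mem_Sset]
  rw [mem_Sset] at this
  rcases this with h1 | h1 | ⟨b, h1⟩
  · exact absurd (inl_injective h1) hc
  · exact inl_injective h1
  · exact absurd h1 (by simp)

lemma classify (hn : 2 ≤ n) (S : Finset (Fin m ⊕ Fin n))
    (h : Nonempty ((lollipop m n).induce (↑S : Set (Fin m ⊕ Fin n)) ≃g pathGraph (n + 2))) :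
    ∃ c : Fin m, c ≠ 0 ∧ S = Sset m n c := by
  obtain ⟨φ⟩ := h
  -- cardinality
  have hcard : S.card = n + 2 := by
    have := Fintype.card_congr φ.toEquiv
    simpa using this
  -- at most two inl's
  have hA2 : (S.filter (·.isLeft)).card ≤ 2 := by
    by_contra hA
    push_neg at hA
    obtain ⟨t, hts, ht3⟩ := Finset.exists_subset_card_eq (show 3 ≤ (S.filter (·.isLeft)).card by omega)
    obtain ⟨x, y, z, hxy, hxz, hyz, rfl⟩ := Finset.card_eq_three.mp ht3
    have hx : x ∈ S.filter (·.isLeft) := hts (by simp)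
    have hy : y ∈ S.filter (·.isLeft) := hts (by simp)
    have hz : z ∈ S.filter (·.isLeft) := hts (by simp)
    obtain ⟨a, rfl⟩ := Sum.isLeft_iff.mp (Finset.mem_filter.mp hx).2
    obtain ⟨b, rfl⟩ := Sum.isLeft_iff.mp (Finset.mem_filter.mp hy).2
    obtain ⟨c, rfl⟩ := Sum.isLeft_iff.mp (Finset.mem_filter.mp hz).2
    have ma : (inl a : Fin m ⊕ Fin n) ∈ (↑S : Set _) := (Finset.mem_filter.mp hx).1
    have mb : (inl b : Fin m ⊕ Fin n) ∈ (↑S : Set _) := (Finset.mem_filter.mp hy).1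
    have mc : (inl c : Fin m ⊕ Fin n) ∈ (↑S : Set _) := (Finset.mem_filter.mp hz).1
    set u : ↥(↑S : Set (Fin m ⊕ Fin n)) := ⟨inl a, ma⟩
    set v : ↥(↑S : Set (Fin m ⊕ Fin n)) := ⟨inl b, mb⟩
    set w : ↥(↑S : Set (Fin m ⊕ Fin n)) := ⟨inl c, mc⟩
    have h1 : (pathGraph (n+2)).Adj (φ u) (φ v) :=
      φ.map_rel_iff.mpr (induce_adj'.mpr (adj_ll.mpr (fun h => hxy (congrArg inl h))))
    have h2 : (pathGraph (n+2)).Adj (φ u) (φ w) :=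
      φ.map_rel_iff.mpr (induce_adj'.mpr (adj_ll.mpr (fun h => hxz (congrArg inl h))))
    have h3 : (pathGraph (n+2)).Adj (φ v) (φ w) :=
      φ.map_rel_iff.mpr (induce_adj'.mpr (adj_ll.mpr (fun h => hyz (congrArg inl h))))
    rw [pathGraph_adj] at h1 h2 h3
    omega
  -- right part
  have hBsub : S.filter (·.isRight) ⊆ Finset.univ.image inr := by
    intro x hx
    obtain ⟨b, rfl⟩ := Sum.isRight_iff.mp (Finset.mem_filter.mp hx).2
    exact Finset.mem_image.mpr ⟨b, Finset.mem_univ b, rfl⟩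
  have himg : (Finset.univ.image (inr : Fin n → Fin m ⊕ Fin n)).card = n := by
    rw [Finset.card_image_of_injective _ inr_injective, Finset.card_univ, Fintype.card_fin]
  have hsplit : (S.filter (·.isLeft)).card + (S.filter (·.isRight)).card = S.card := by
    have h := Finset.card_filter_add_card_filter_not (s := S) (p := (·.isLeft = true))
    have h2 : S.filter (fun a => ¬ a.isLeft = true) = S.filter (·.isRight) := by
      apply Finset.filter_congr
      intro x _
      simp
    rw [h2] at h
    exact h
  have hB : (S.filter (·.isRight)).card = n := by
    have := Finset.card_le_card hBsub
    omega
  have hA : (S.filter (·.isLeft)).card = 2 := by omega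
  have hBeq : S.filter (·.isRight) = Finset.univ.image inr :=
    Finset.eq_of_subset_of_card_le hBsub (by omega)
  have hinr : ∀ b : Fin n, (inr b : Fin m ⊕ Fin n) ∈ S := by
    intro b
    have hb : (inr b : Fin m ⊕ Fin n) ∈ S.filter (·.isRight) := by
      rw [hBeq]; exact Finset.mem_image.mpr ⟨b, Finset.mem_univ b, rfl⟩
    exact (Finset.mem_filter.mp hb).1
  obtain ⟨x, y, hxy, hAeq⟩ := Finset.card_eq_two.mp hA
  have hxm : x ∈ S.filter (·.isLeft) := by rw [hAeq]; simp
  have hym : y ∈ S.filter (·.isLeft) := by rw [hAeq]; simp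
  obtain ⟨a, rfl⟩ := Sum.isLeft_iff.mp (Finset.mem_filter.mp hxm).2
  obtain ⟨b, rfl⟩ := Sum.isLeft_iff.mp (Finset.mem_filter.mp hym).2
  have hab : a ≠ b := fun h => hxy (congrArg inl h)
  have hmemS : ∀ z : Fin m, (inl z : Fin m ⊕ Fin n) ∈ S → z = a ∨ z = b := by
    intro z hz
    have hz' : (inl z : Fin m ⊕ Fin n) ∈ S.filter (·.isLeft) :=
      Finset.mem_filter.mpr ⟨hz, rfl⟩
    rw [hAeq] at hz'
    rcases Finset.mem_insert.mp hz' with h | h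
    · exact Or.inl (inl_injective h)
    · exact Or.inr (inl_injective (Finset.mem_singleton.mp h))
  have haS : (inl a : Fin m ⊕ Fin n) ∈ S := (Finset.mem_filter.mp hxm).1
  have hbS : (inl b : Fin m ⊕ Fin n) ∈ S := (Finset.mem_filter.mp hym).1
  have final : ∀ c : Fin m, c ≠ 0 → (inl 0 : Fin m ⊕ Fin n) ∈ S → (inl c : Fin m ⊕ Fin n) ∈ S →
      (∀ z : Fin m, (inl z : Fin m ⊕ Fin n) ∈ S → z = 0 ∨ z = c) → S = Sset m n c := by
    intro c hc h0 hcS hcls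
    ext w
    rw [mem_Sset]
    constructor
    · intro hw
      match w with
      | inl z =>
        rcases hcls z hw with rfl | rfl
        · exact Or.inl rfl
        · exact Or.inr (Or.inl rfl)
      | inr b => exact Or.inr (Or.inr ⟨b, rfl⟩)
    · rintro (rfl | rfl | ⟨b, rfl⟩)
      exacts [h0, hcS, hinr b]
  -- zero is one of a, b
  have hzero : a = 0 ∨ b = 0 := by
    by_contra hno
    push_neg at hno
    obtain ⟨ha0, hb0⟩ := hno
    have step : ∀ {u v : ↥(↑S : Set (Fin m ⊕ Fin n))},
        ((lollipop m n).induce (↑S : Set _)).Adj u v →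
          (↑u : Fin m ⊕ Fin n).isLeft = (↑v : Fin m ⊕ Fin n).isLeft := by
      rintro ⟨xu, hxu⟩ ⟨xv, hxv⟩ hadj
      have hG := induce_adj'.mp hadj
      match xu, xv with
      | inl p, inl q => rfl
      | inr p, inr q => rfl
      | inl p, inr q =>
        exfalso
        have hp0 : (p : ℕ) = 0 := (adj_lr.mp hG).1
        rcases hmemS p hxu with rfl | rfl
        · exact ha0 (Fin.ext hp0)
        · exact hb0 (Fin.ext hp0)
      | inr p, inl q =>
        exfalso
        have hq0 : (q : ℕ) = 0 := (adj_rl.mp hG).1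
        rcases hmemS q hxv with rfl | rfl
        · exact ha0 (Fin.ext hq0)
        · exact hb0 (Fin.ext hq0)
    have key : ∀ (u v : ↥(↑S : Set (Fin m ⊕ Fin n)))
        (_ : ((lollipop m n).induce (↑S : Set _)).Walk u v),
        (↑u : Fin m ⊕ Fin n).isLeft = (↑v : Fin m ⊕ Fin n).isLeft := by
      intro u v w
      induction w with
      | nil => rfl
      | cons hadj p ih => exact (step hadj).trans ih
    have hconn : ((lollipop m n).induce (↑S : Set _)).Connected :=
      φ.connected_iff.mpr (pathGraph_connected (n + 1))
    have hz0 : (inr (⟨0, by omega⟩ : Fin n) : Fin m ⊕ Fin n) ∈ (↑S : Set (Fin m ⊕ Fin n)) :=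
      hinr _
    obtain ⟨w⟩ := hconn.preconnected ⟨inl a, haS⟩ ⟨inr ⟨0, by omega⟩, hz0⟩
    have := key _ _ w
    simp at this
  rcases hzero with rfl | rfl
  · refine ⟨b, Ne.symm hab, final b (Ne.symm hab) haS hbS ?_⟩
    intro z hz
    exact hmemS z hz
  · refine ⟨a, hab, final a hab hbS haS ?_⟩
    intro z hz
    rcases hmemS z hz with h | h
    · exact Or.inr h
    · exact Or.inl h

lemma part1 (hn : 2 ≤ n) :
    Nat.card {S : Finset (Fin m ⊕ Fin n) //
      Nonempty ((lollipop m n).induce (↑S : Set (Fin m ⊕ Fin n)) ≃g pathGraph (n + 2))} = m - 1 := by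
  have hbij : Function.Bijective
      (fun c : {c : Fin m // c ≠ 0} =>
        (⟨Sset m n c.1, Sset_iso c.2⟩ : {S : Finset (Fin m ⊕ Fin n) //
          Nonempty ((lollipop m n).induce (↑S : Set (Fin m ⊕ Fin n)) ≃g pathGraph (n + 2))})) := by
    constructor
    · intro c d hcd
      exact Subtype.ext (Sset_injective c.2 d.2 (by simpa [Subtype.ext_iff] using hcd))
    · rintro ⟨S, hS⟩
      obtain ⟨c, hc, rfl⟩ := classify hn S hS
      exact ⟨⟨c, hc⟩, rfl⟩
  rw [← Nat.card_eq_of_bijective _ hbij, Nat.card_eq_fintype_card]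
  have := Set.card_ne_eq (0 : Fin m)
  simpa using this


variable {m n : ℕ}

/-- the path subgraph determined by an embedding into the clique -/
def pathSub (f : Fin (n+2) ↪ Fin m) : (lollipop m n).Subgraph where
  verts := Set.range (fun i => (inl (f i) : Fin m ⊕ Fin n))
  Adj a b := ∃ i j : Fin (n+2), (i:ℕ) + 1 = (j:ℕ) ∧
    ((a = inl (f i) ∧ b = inl (f j)) ∨ (a = inl (f j) ∧ b = inl (f i)))
  adj_sub := by
    rintro a b ⟨i, j, hij, (⟨rfl, rfl⟩ | ⟨rfl, rfl⟩)⟩ <;>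
      · rw [adj_ll]
        intro h
        have := congrArg Fin.val (f.injective h)
        omega
  edge_vert := by
    rintro a b ⟨i, j, hij, (⟨rfl, -⟩ | ⟨rfl, -⟩)⟩ <;> exact ⟨_, rfl⟩
  symm := by
    constructor
    rintro a b ⟨i, j, hij, (⟨h1, h2⟩ | ⟨h1, h2⟩)⟩
    · exact ⟨i, j, hij, Or.inr ⟨h2, h1⟩⟩
    · exact ⟨i, j, hij, Or.inl ⟨h2, h1⟩⟩

lemma pathSub_consec (f : Fin (n+2) ↪ Fin m) {i j : Fin (n+2)} (hij : (i:ℕ) + 1 = (j:ℕ)) :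
    (pathSub f).Adj (inl (f i)) (inl (f j)) :=
  ⟨i, j, hij, Or.inl ⟨rfl, rfl⟩⟩

lemma pathSub_coe_iso (f : Fin (n+2) ↪ Fin m) :
    Nonempty ((pathSub f).coe ≃g pathGraph (n+2)) := by
  have hbij : Function.Bijective
      (fun i : Fin (n+2) => (⟨inl (f i), ⟨i, rfl⟩⟩ : ↥(pathSub f).verts)) := by
    constructor
    · intro i j hij
      have h2 : (inl (f i) : Fin m ⊕ Fin n) = inl (f j) := congrArg Subtype.val hij
      exact f.injective (inl_injective h2)
    · rintro ⟨x, ⟨i, rfl⟩⟩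
      exact ⟨i, rfl⟩
  refine ⟨(SimpleGraph.Iso.symm ⟨Equiv.ofBijective _ hbij, ?_⟩)⟩
  intro x y
  show (pathSub f).Adj (inl (f x)) (inl (f y)) ↔ (pathGraph (n+2)).Adj x y
  rw [pathGraph_adj]
  constructor
  · rintro ⟨i, j, hij, (⟨h1, h2⟩ | ⟨h1, h2⟩)⟩ <;>
    · have e1 := congrArg Fin.val (f.injective (inl_injective h1))
      have e2 := congrArg Fin.val (f.injective (inl_injective h2))
      omega
  · rintro (h | h)
    · exact ⟨x, y, h, Or.inl ⟨rfl, rfl⟩⟩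
    · exact ⟨y, x, h, Or.inr ⟨rfl, rfl⟩⟩

lemma neighbor_zero (g : Fin (n+2) ↪ Fin m) {b : Fin m ⊕ Fin n}
    (h : (pathSub g).Adj (inl (g ⟨0, by omega⟩)) b) : b = inl (g ⟨1, by omega⟩) := by
  obtain ⟨i, j, hij, (⟨h1, h2⟩ | ⟨h1, h2⟩)⟩ := h
  · have e1 : (0 : ℕ) = (i : ℕ) := congrArg Fin.val (g.injective (inl_injective h1))
    have hj : j = ⟨1, by omega⟩ := Fin.ext (show (j : ℕ) = 1 by omega)
    rw [h2, hj]
  · have e1 : (0 : ℕ) = (j : ℕ) := congrArg Fin.val (g.injective (inl_injective h1))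
    omega

lemma recon_forward (f g : Fin (n+2) ↪ Fin m)
    (h : ∀ a b, (pathSub g).Adj a b → (pathSub f).Adj a b)
    (h0 : g ⟨0, by omega⟩ = f ⟨0, by omega⟩) :
    ∀ i : ℕ, ∀ hi : i < n + 2, g ⟨i, hi⟩ = f ⟨i, hi⟩ := by
  intro i
  induction i using Nat.strong_induction_on with
  | _ i IH =>
    intro hi
    match i, hi with
    | 0, hi => exact h0
    | (i' + 1), hi =>
      have hi' : i' < n + 2 := by omega
      have hIH : g ⟨i', hi'⟩ = f ⟨i', hi'⟩ := IH i' (by omega) hi'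
      have hadj : (pathSub f).Adj (inl (g ⟨i', hi'⟩)) (inl (g ⟨i' + 1, hi⟩)) :=
        h _ _ (pathSub_consec g (by simp))
      obtain ⟨a, b, hab, (⟨h1, h2⟩ | ⟨h1, h2⟩)⟩ := hadj
      · have e1 : f a = f ⟨i', hi'⟩ := (inl_injective h1).symm.trans hIH
        have ha : a = ⟨i', hi'⟩ := f.injective e1
        have hav : (a : ℕ) = i' := congrArg Fin.val ha
        have hb : b = ⟨i' + 1, hi⟩ := Fin.ext (show (b : ℕ) = i' + 1 by omega)
        have t1 : g ⟨i' + 1, hi⟩ = f b := inl_injective h2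
        have t2 : f b = f ⟨i' + 1, hi⟩ := congrArg (⇑f) hb
        exact t1.trans t2
      · have e1 : f b = f ⟨i', hi'⟩ := (inl_injective h1).symm.trans hIH
        have hb : b = ⟨i', hi'⟩ := f.injective e1
        have hbval : (b : ℕ) = i' := congrArg Fin.val hb
        have hi'1 : 1 ≤ i' := by omega
        have ha : a = ⟨i' - 1, by omega⟩ := Fin.ext (show (a : ℕ) = i' - 1 by omega)
        have t1 : g ⟨i' + 1, hi⟩ = f a := inl_injective h2
        have t2 : f a = f ⟨i' - 1, by omega⟩ := congrArg (⇑f) ha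
        have t3 : g ⟨i' - 1, by omega⟩ = f ⟨i' - 1, by omega⟩ := IH (i' - 1) (by omega) (by omega)
        have e2 : g ⟨i' + 1, hi⟩ = g ⟨i' - 1, by omega⟩ := (t1.trans t2).trans t3.symm
        have efin : (i' + 1 : ℕ) = i' - 1 := congrArg Fin.val (g.injective e2)
        omega

/-- reversal of an embedding -/
def revE (f : Fin (n+2) ↪ Fin m) : Fin (n+2) ↪ Fin m :=
  ⟨fun i => f i.rev, f.injective.comp Fin.rev_injective⟩

lemma pathSub_revE (f : Fin (n+2) ↪ Fin m) : pathSub (revE f) = pathSub f := by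
  apply SimpleGraph.Subgraph.ext
  · ext x
    constructor
    · rintro ⟨i, rfl⟩; exact ⟨i.rev, rfl⟩
    · rintro ⟨i, rfl⟩; exact ⟨i.rev, by simp [revE]⟩
  · ext a b
    show (∃ i j : Fin (n+2), _) ↔ (∃ i j : Fin (n+2), _)
    constructor
    · rintro ⟨i, j, hij, hc⟩
      refine ⟨j.rev, i.rev, ?_, ?_⟩
      · rw [Fin.val_rev, Fin.val_rev]; omega
      · simp only [revE, Function.Embedding.coeFn_mk] at hc
        tauto
    · rintro ⟨i, j, hij, hc⟩
      refine ⟨j.rev, i.rev, ?_, ?_⟩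
      · rw [Fin.val_rev, Fin.val_rev]; omega
      · simp only [revE, Function.Embedding.coeFn_mk, Fin.rev_rev]
        tauto

set_option maxHeartbeats 1000000

variable {m n : ℕ}

lemma revE_zero (f : Fin (n+2) ↪ Fin m) :
    revE f ⟨0, by omega⟩ = f ⟨n+1, by omega⟩ := by
  have h : Fin.rev (⟨0, by omega⟩ : Fin (n+2)) = ⟨n+1, by omega⟩ := by
    apply Fin.ext
    simp [Fin.val_rev]
  show f (Fin.rev ⟨0, by omega⟩) = f ⟨n+1, by omega⟩
  rw [h]

lemma revE_last (f : Fin (n+2) ↪ Fin m) :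
    revE f ⟨n+1, by omega⟩ = f ⟨0, by omega⟩ := by
  have h : Fin.rev (⟨n+1, by omega⟩ : Fin (n+2)) = ⟨0, by omega⟩ := by
    apply Fin.ext
    simp [Fin.val_rev]
  show f (Fin.rev ⟨n+1, by omega⟩) = f ⟨0, by omega⟩
  rw [h]

lemma endpoint (f g : Fin (n+2) ↪ Fin m)
    (h : ∀ a b, (pathSub f).Adj a b ↔ (pathSub g).Adj a b) :
    g ⟨0, by omega⟩ = f ⟨0, by omega⟩ ∨ g ⟨0, by omega⟩ = f ⟨n+1, by omega⟩ := by
  have hadj : (pathSub f).Adj (inl (g ⟨0, by omega⟩)) (inl (g ⟨1, by omega⟩)) :=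
    (h _ _).mpr (pathSub_consec g rfl)
  obtain ⟨i, j, hij, hc⟩ := hadj
  have hex : ∃ s : Fin (n+2), g ⟨0, by omega⟩ = f s := by
    rcases hc with ⟨h1, -⟩ | ⟨h1, -⟩
    · exact ⟨i, inl_injective h1⟩
    · exact ⟨j, inl_injective h1⟩
  obtain ⟨s, hs⟩ := hex
  by_cases hs0 : (s : ℕ) = 0
  · exact Or.inl (hs.trans (congrArg (⇑f) (Fin.ext hs0)))
  by_cases hsl : (s : ℕ) = n + 1
  · exact Or.inr (hs.trans (congrArg (⇑f) (Fin.ext hsl)))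
  exfalso
  have hslt : (s : ℕ) < n + 2 := s.isLt
  have h1 : (pathSub g).Adj (inl (g ⟨0, by omega⟩)) (inl (f ⟨(s:ℕ) - 1, by omega⟩)) := by
    have := (h _ _).mp ((pathSub_consec f
      (show ((⟨(s:ℕ) - 1, by omega⟩ : Fin (n+2)) : ℕ) + 1 = (s : ℕ) by
        simp only []; omega)).symm)
    rwa [← hs] at this
  have h2 : (pathSub g).Adj (inl (g ⟨0, by omega⟩)) (inl (f ⟨(s:ℕ) + 1, by omega⟩)) := by
    have := (h _ _).mp (pathSub_consec f
      (show (s : ℕ) + 1 = ((⟨(s:ℕ) + 1, by omega⟩ : Fin (n+2)) : ℕ) by simp only []))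
    rwa [← hs] at this
  have n1 := neighbor_zero g h1
  have n2 := neighbor_zero g h2
  have hff : f ⟨(s:ℕ) - 1, by omega⟩ = f ⟨(s:ℕ) + 1, by omega⟩ :=
    inl_injective (n1.trans n2.symm)
  have := congrArg Fin.val (f.injective hff)
  simp only [] at this
  omega

lemma pathSub_inj {f g : Fin (n+2) ↪ Fin m}
    (hf : f ⟨0, by omega⟩ < f ⟨n+1, by omega⟩) (hg : g ⟨0, by omega⟩ < g ⟨n+1, by omega⟩)
    (heq : pathSub f = pathSub g) : f = g := by
  have hAdj : ∀ a b, (pathSub f).Adj a b ↔ (pathSub g).Adj a b := by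
    rw [heq]; exact fun a b => Iff.rfl
  rcases endpoint f g hAdj with h0 | h0
  · have hall := recon_forward f g (fun a b hab => (hAdj a b).mpr hab) h0
    apply DFunLike.ext
    intro i
    exact (hall i.val i.isLt).symm
  · exfalso
    have h0' : g ⟨0, by omega⟩ = revE f ⟨0, by omega⟩ := h0.trans (revE_zero f).symm
    have hEq2 : pathSub (revE f) = pathSub g := (pathSub_revE f).trans heq
    have hall := recon_forward (revE f) g
      (fun a b hab => by rw [hEq2]; exact hab) h0'
    have hl := hall (n+1) (by omega)
    have e1 : g ⟨n+1, by omega⟩ = f ⟨0, by omega⟩ := hl.trans (revE_last f)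
    exact lt_asymm hf (lt_of_lt_of_eq (lt_of_eq_of_lt h0.symm hg) e1)

lemma revE_revE (f : Fin (n+2) ↪ Fin m) : revE (revE f) = f := by
  apply DFunLike.ext
  intro i
  show f (Fin.rev (Fin.rev i)) = f i
  rw [Fin.rev_rev]

lemma f_ne (f : Fin (n+2) ↪ Fin m) : f ⟨0, by omega⟩ ≠ f ⟨n+1, by omega⟩ := by
  intro h
  have h2 : (0 : ℕ) = n + 1 := congrArg Fin.val (f.injective h)
  omega

lemma card_emb :
    Fintype.card {f : Fin (n+2) ↪ Fin m // f ⟨0, by omega⟩ < f ⟨n+1, by omega⟩} * 2 =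
      m.descFactorial (n+2) := by
  classical
  let T := {f : Fin (n+2) ↪ Fin m // f ⟨0, by omega⟩ < f ⟨n+1, by omega⟩}
  let E : (Fin (n+2) ↪ Fin m) ≃ T × Bool :=
    { toFun := fun f =>
        if h : f ⟨0, by omega⟩ < f ⟨n+1, by omega⟩ then (⟨f, h⟩, true)
        else (⟨revE f, by
          rw [revE_zero, revE_last]
          exact lt_of_le_of_ne (not_lt.mp h) (Ne.symm (f_ne f))⟩, false)
      invFun := fun p => if p.2 then p.1.1 else revE p.1.1
      left_inv := by
        intro f
        by_cases h : f ⟨0, by omega⟩ < f ⟨n+1, by omega⟩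
        · dsimp only
          rw [dif_pos h]
          rfl
        · dsimp only
          rw [dif_neg h]
          exact revE_revE f
      right_inv := by
        rintro ⟨⟨f, hf⟩, b⟩
        cases b
        · dsimp only
          have hnot : ¬ (revE f) ⟨0, by omega⟩ < (revE f) ⟨n+1, by omega⟩ := by
            rw [revE_zero, revE_last]; exact not_lt.mpr (le_of_lt hf)
          simp only [Bool.false_eq_true, if_false, dif_neg hnot]
          exact Prod.ext (Subtype.ext (revE_revE f)) rfl
        · dsimp only
          simp only [if_true, dif_pos hf] }
  have h1 : Fintype.card (Fin (n+2) ↪ Fin m) = Fintype.card T * 2 := by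
    rw [Fintype.card_congr E, Fintype.card_prod, Fintype.card_bool]
  rw [← h1, Fintype.card_embedding_eq, Fintype.card_fin, Fintype.card_fin]

lemma part2 (hm : n + 2 ≤ m) :
    (m.factorial : ℝ) / (2 * ((m - (n+2)).factorial : ℝ)) ≤
      (Nat.card {H : (lollipop m n).Subgraph // Nonempty (H.coe ≃g pathGraph (n+2))} : ℝ) := by
  classical
  haveI : Finite ((lollipop m n).Subgraph) :=
    Finite.of_injective (fun H => (H.verts, H.Adj)) (by
      intro H1 H2 hh
      exact SimpleGraph.Subgraph.ext (congrArg Prod.fst hh) (congrArg Prod.snd hh))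
  have hinj : Function.Injective
      (fun f : {f : Fin (n+2) ↪ Fin m // f ⟨0, by omega⟩ < f ⟨n+1, by omega⟩} =>
        (⟨pathSub f.1, pathSub_coe_iso f.1⟩ :
          {H : (lollipop m n).Subgraph // Nonempty (H.coe ≃g pathGraph (n+2))})) := by
    intro f g hfg
    exact Subtype.ext (pathSub_inj f.2 g.2 (by simpa [Subtype.ext_iff] using hfg))
  have hle := Nat.card_le_card_of_injective _ hinj
  rw [Nat.card_eq_fintype_card] at hle
  have hcard2 := card_emb (m := m) (n := n)
  have hfact : (m - (n+2)).factorial * m.descFactorial (n+2) = m.factorial :=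
    Nat.factorial_mul_descFactorial hm
  set T := Fintype.card {f : Fin (n+2) ↪ Fin m // f ⟨0, by omega⟩ < f ⟨n+1, by omega⟩} with hT
  have keyN : m.factorial = (m - (n+2)).factorial * (T * 2) := by
    rw [← hfact, ← hcard2]
  have key : (m.factorial : ℝ) = ((m - (n+2)).factorial : ℝ) * ((T : ℝ) * 2) := by
    exact_mod_cast congrArg (Nat.cast (R := ℝ)) keyN
  rw [key]
  have hpos : (0:ℝ) < ((m - (n+2)).factorial : ℝ) := by positivity
  have heq2 : ((m - (n+2)).factorial : ℝ) * (T * 2) / (2 * ((m - (n+2)).factorial : ℝ)) = T := by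
    field_simp
  rw [heq2]
  exact_mod_cast hle


variable {m n : ℕ}

lemma subgraph_adj_iff {H : (lollipop m n).Subgraph}
    (h1 : Nonempty (H.coe ≃g pathGraph (n+2)))
    (h2 : Nonempty ((lollipop m n).induce H.verts ≃g pathGraph (n+2))) :
    ∀ a b, H.Adj a b ↔ a ∈ H.verts ∧ b ∈ H.verts ∧ (lollipop m n).Adj a b := by
  classical
  obtain ⟨φ⟩ := h1
  obtain ⟨ψ⟩ := h2
  have hle : H.coe ≤ (lollipop m n).induce H.verts := by
    intro u v huv
    exact H.adj_sub huv
  have hcard : ((lollipop m n).induce H.verts).edgeSet.ncard ≤ H.coe.edgeSet.ncard := by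
    have e1 := φ.mapEdgeSet
    have e2 := ψ.mapEdgeSet
    rw [← Nat.card_coe_set_eq, ← Nat.card_coe_set_eq]
    exact le_of_eq ((Nat.card_congr e2).trans (Nat.card_congr e1.symm))
  have hedge : H.coe.edgeSet = ((lollipop m n).induce H.verts).edgeSet :=
    Set.eq_of_subset_of_ncard_le (edgeSet_mono hle) hcard (Set.toFinite _)
  have hGeq : H.coe = (lollipop m n).induce H.verts := edgeSet_inj.mp hedge
  intro a b
  constructor
  · intro hab
    exact ⟨H.edge_vert hab, H.edge_vert hab.symm, H.adj_sub hab⟩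
  · rintro ⟨ha, hb, hab⟩
    have h3 : ((lollipop m n).induce H.verts).Adj ⟨a, ha⟩ ⟨b, hb⟩ := hab
    rw [← hGeq] at h3
    exact h3

lemma part3 [NeZero m] (hn : 2 ≤ n) :
    Nat.card {H : (lollipop m n).Subgraph //
      Nonempty (H.coe ≃g pathGraph (n+2)) ∧
      Nonempty ((lollipop m n).induce H.verts ≃g pathGraph (n+2))} ≤ m - 1 := by
  classical
  rw [← part1 hn]
  apply Nat.card_le_card_of_injective
    (fun H => (⟨(Set.toFinite H.1.verts).toFinset, by
      rw [Set.Finite.coe_toFinset]; exact H.2.2⟩ :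
      {S : Finset (Fin m ⊕ Fin n) //
        Nonempty ((lollipop m n).induce (↑S : Set (Fin m ⊕ Fin n)) ≃g pathGraph (n + 2))}))
  intro H1 H2 hfg
  have hverts : H1.1.verts = H2.1.verts := by
    have := congrArg (fun S => (↑(S.1) : Set (Fin m ⊕ Fin n))) hfg
    simpa [Set.Finite.coe_toFinset] using this
  apply Subtype.ext
  apply SimpleGraph.Subgraph.ext hverts
  funext a b
  apply propext
  rw [subgraph_adj_iff H1.2.1 H1.2.2, subgraph_adj_iff H2.2.1 H2.2.2, hverts]

end LollipopAux

open SimpleGraph Sum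

/-- For integers k ≥ 4 and m ≥ k, in the (m, k−2)-lollipop graph L the number
of induced copies of P_k is m − 1, the number of (not necessarily induced) k-vertex path
subgraphs is at least m!/(2·(m−k)!), and hence the fraction of k-vertex path subgraphs of L
whose vertex set induces a copy of P_k is at most 2·(m−1)·(m−k)!/m!. -/

theorem lollipop_path_fraction (m k : ℕ) (hk : 4 ≤ k) (hm : k ≤ m) :
    Nat.card {S : Finset (Fin m ⊕ Fin (k - 2)) //
        Nonempty ((lollipop m (k - 2)).induce (↑S : Set (Fin m ⊕ Fin (k - 2)))
          ≃g SimpleGraph.pathGraph k)} = m - 1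
    ∧ (m.factorial : ℝ) / (2 * (m - k).factorial)
        ≤ (Nat.card {H : (lollipop m (k - 2)).Subgraph //
            Nonempty (H.coe ≃g SimpleGraph.pathGraph k)} : ℝ)
    ∧ (Nat.card {H : (lollipop m (k - 2)).Subgraph //
            Nonempty (H.coe ≃g SimpleGraph.pathGraph k)
              ∧ Nonempty ((lollipop m (k - 2)).induce H.verts
                  ≃g SimpleGraph.pathGraph k)} : ℝ)
        / (Nat.card {H : (lollipop m (k - 2)).Subgraph //
            Nonempty (H.coe ≃g SimpleGraph.pathGraph k)} : ℝ)
        ≤ 2 * (m - 1 : ℝ) * ((m - k).factorial : ℝ) / (m.factorial : ℝ) := by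
  haveI : NeZero m := ⟨by omega⟩
  obtain ⟨n, rfl⟩ : ∃ n, k = n + 2 := ⟨k - 2, by omega⟩
  have hn : 2 ≤ n := by omega
  refine ⟨part1 hn, part2 hm, ?_⟩
  have hD := part2 (m := m) (n := n) hm
  have hE : (0:ℝ) < (m.factorial : ℝ) / (2 * ((m - (n+2)).factorial : ℝ)) := by positivity
  have hNum := part3 (m := m) hn
  have hm1 : ((m - 1 : ℕ) : ℝ) = (m : ℝ) - 1 := by
    rw [Nat.cast_sub (by omega), Nat.cast_one]
  have step1 : (Nat.card {H : (lollipop m n).Subgraph //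
        Nonempty (H.coe ≃g pathGraph (n+2)) ∧
        Nonempty ((lollipop m n).induce H.verts ≃g pathGraph (n+2))} : ℝ)
      / (Nat.card {H : (lollipop m n).Subgraph //
        Nonempty (H.coe ≃g pathGraph (n+2))} : ℝ)
      ≤ ((m - 1 : ℕ) : ℝ) / ((m.factorial : ℝ) / (2 * ((m - (n+2)).factorial : ℝ))) :=
    div_le_div₀ (by positivity) (by exact_mod_cast hNum) hE hD
  refine le_trans step1 ?_
  rw [hm1, div_div_eq_mul_div]
  have hfpos : (0:ℝ) < (m.factorial : ℝ) := by
    exact_mod_cast Nat.factorial_pos m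
  refine le_of_eq ?_
  ring
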